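/- Let f, g : [0, T] → (0, ∞) be absolutely continuous functions and let F : (0,∞) → (0,∞) be continuous. Suppose f(0) ≤ g(0), f'(t) ≤ -F(f(t)) for almost every t, and g'(t) = -F(g(t)) for all t. Then f(t) ≤ g(t) for all t ∈ [0, T]. -/

import Mathlib

open MeasureTheory

open Set Filter Topology

theorem stmt_5 (T : ℝ) (hT : 0 ≤ T) (f g f' F : ℝ → ℝ)
    (hFc : ContinuousOn F (Set.Ioi 0)) (hFpos : ∀ p > (0:ℝ), 0 < F p)
    (hfpos : ∀ t ∈ Set.Icc 0 T, 0 < f t) (hgpos : ∀ t ∈ Set.Icc 0 T, 0 < g t)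
    (hf'int : IntervalIntegrable f' volume 0 T)
    (hfAC : ∀ t ∈ Set.Icc 0 T, f t = f 0 + ∫ s in (0:ℝ)..t, f' s)
    (hf' : ∀ᵐ t ∂(volume.restrict (Set.Icc 0 T)), f' t ≤ -F (f t))
    (hg : ∀ t ∈ Set.Icc 0 T, HasDerivAt g (-F (g t)) t)
    (h0 : f 0 ≤ g 0) :
    ∀ t ∈ Set.Icc 0 T, f t ≤ g t := by
  -- `f` is continuous on `[0, T]`
  have hf'Icc : IntegrableOn f' (Set.Icc 0 T) volume :=
    (intervalIntegrable_iff_integrableOn_Icc_of_le hT).mp hf'int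
  have hfc : ContinuousOn f (Set.Icc 0 T) := by
    have hprim : ContinuousOn (fun x => f 0 + ∫ s in (0:ℝ)..x, f' s) (Set.Icc 0 T) := by
      have := intervalIntegral.continuousOn_primitive_interval
        (f := f') (a := (0:ℝ)) (b := T) (μ := volume) (by rwa [Set.uIcc_of_le hT])
      rw [Set.uIcc_of_le hT] at this
      exact continuousOn_const.add this
    exact hprim.congr fun x hx => hfAC x hx
  -- intervals inside [0,T]
  have hsubI : ∀ x z : ℝ, x ∈ Set.Icc 0 T → z ∈ Set.Icc 0 T → x ≤ z →
      Set.Icc x z ⊆ Set.Icc 0 T := fun x z hx hz _ =>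
    Set.Icc_subset_Icc hx.1 hz.2
  have hf'sub : ∀ x z : ℝ, x ∈ Set.Icc 0 T → z ∈ Set.Icc 0 T →
      IntervalIntegrable f' volume x z := by
    intro x z hx hz
    apply hf'int.mono_set
    rw [Set.uIcc_of_le hT]
    rintro y hy
    rcases Set.mem_uIcc.mp hy with ⟨h1, h2⟩ | ⟨h1, h2⟩
    · exact ⟨hx.1.trans h1, h2.trans hz.2⟩
    · exact ⟨hz.1.trans h1, h2.trans hx.2⟩
  -- increment formula
  have hkey : ∀ x z : ℝ, x ∈ Set.Icc 0 T → z ∈ Set.Icc 0 T →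
      f z - f x = ∫ s in x..z, f' s := by
    intro x z hx hz
    rw [hfAC z hz, hfAC x hx]
    have h1 : IntervalIntegrable f' volume 0 z := hf'sub 0 z ⟨le_rfl, hT⟩ hz
    have h2 : IntervalIntegrable f' volume 0 x := hf'sub 0 x ⟨le_rfl, hT⟩ hx
    have := intervalIntegral.integral_interval_sub_left h1 h2
    linarith [this]
  -- integrability of F ∘ f
  have hFfc : ∀ x z : ℝ, x ∈ Set.Icc 0 T → z ∈ Set.Icc 0 T → x ≤ z →
      IntervalIntegrable (fun s => F (f s)) volume x z := by
    intro x z hx hz hxz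
    apply ContinuousOn.intervalIntegrable
    rw [Set.uIcc_of_le hxz]
    exact hFc.comp (hfc.mono (hsubI x z hx hz hxz))
      (fun u hu => hfpos u (hsubI x z hx hz hxz hu))
  -- decrement bound
  have hdecr : ∀ x z : ℝ, x ∈ Set.Icc 0 T → z ∈ Set.Icc 0 T → x ≤ z →
      f z - f x ≤ -∫ s in x..z, F (f s) := by
    intro x z hx hz hxz
    rw [hkey x z hx hz]
    have hae : ∀ᵐ t ∂(volume.restrict (Set.Icc x z)), f' t ≤ -F (f t) :=
      ae_restrict_of_ae_restrict_of_subset (hsubI x z hx hz hxz) hf'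
    have := intervalIntegral.integral_mono_ae_restrict hxz (hf'sub x z hx hz)
      ((hFfc x z hx hz hxz).neg) hae
    simp only [Pi.neg_apply] at this
    rwa [intervalIntegral.integral_neg] at this
  -- the function Φ
  set Φ : ℝ → ℝ := fun x => ∫ y in (1:ℝ)..x, (F y)⁻¹ with hΦ
  have hFinv_cont : ContinuousOn (fun y => (F y)⁻¹) (Set.Ioi 0) :=
    hFc.inv₀ fun y hy => (hFpos y hy).ne'
  have huIcc_pos : ∀ a b : ℝ, 0 < a → 0 < b → Set.uIcc a b ⊆ Set.Ioi 0 := by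
    intro a b ha hb y hy
    rcases Set.mem_uIcc.mp hy with ⟨h1, _⟩ | ⟨h1, _⟩
    · exact lt_of_lt_of_le ha h1
    · exact lt_of_lt_of_le hb h1
  have hFinv_int : ∀ a b : ℝ, 0 < a → 0 < b →
      IntervalIntegrable (fun y => (F y)⁻¹) volume a b := fun a b ha hb =>
    (hFinv_cont.mono (huIcc_pos a b ha hb)).intervalIntegrable
  have hΦdiff : ∀ a b : ℝ, 0 < a → 0 < b → Φ b - Φ a = ∫ y in a..b, (F y)⁻¹ := by
    intro a b ha hb
    have := intervalIntegral.integral_add_adjacent_intervals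
      (hFinv_int 1 a one_pos ha) (hFinv_int a b ha hb)
    simp only [hΦ]
    linarith [this]
  have hΦmono : ∀ a b : ℝ, 0 < a → 0 < b → a ≤ b → Φ a ≤ Φ b := by
    intro a b ha hb hab
    have h := hΦdiff a b ha hb
    have : 0 ≤ ∫ y in a..b, (F y)⁻¹ := by
      apply intervalIntegral.integral_nonneg hab
      intro u hu
      exact (inv_pos.mpr (hFpos u (lt_of_lt_of_le ha hu.1))).le
    linarith
  have hΦstrict : ∀ a b : ℝ, 0 < a → a < b → Φ a < Φ b := by
    intro a b ha hab
    have h := hΦdiff a b ha (ha.trans hab)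
    have : 0 < ∫ y in a..b, (F y)⁻¹ := by
      apply intervalIntegral.intervalIntegral_pos_of_pos_on
        (hFinv_int a b ha (ha.trans hab))
      · intro u hu
        exact inv_pos.mpr (hFpos u (ha.trans hu.1))
      · exact hab
    linarith
  -- derivative of Φ
  have hΦderiv : ∀ x : ℝ, 0 < x → HasDerivAt Φ (F x)⁻¹ x := by
    intro x hx
    exact intervalIntegral.integral_hasDerivAt_right (hFinv_int 1 x one_pos hx)
      (hFinv_cont.stronglyMeasurableAtFilter isOpen_Ioi x hx)
      (hFinv_cont.continuousAt (isOpen_Ioi.mem_nhds hx))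
  -- g side : Φ (g t) + t is constant
  have hΦg : ∀ t ∈ Set.Icc 0 T, Φ (g t) + t = Φ (g 0) + 0 := by
    have hcont : ContinuousOn (fun t => Φ (g t) + t) (Set.Icc 0 T) := by
      apply ContinuousOn.add _ continuousOn_id
      exact fun t ht => ((hΦderiv (g t) (hgpos t ht)).comp t (hg t ht))
        |>.continuousAt.continuousWithinAt
    have hderiv : ∀ t ∈ Set.Ico 0 T,
        HasDerivWithinAt (fun t => Φ (g t) + t) 0 (Set.Ici t) t := by
      intro t ht
      have ht' : t ∈ Set.Icc 0 T := Set.Ico_subset_Icc_self ht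
      have h1 : HasDerivAt (fun t => Φ (g t) + t) ((F (g t))⁻¹ * (-F (g t)) + 1) t :=
        ((hΦderiv (g t) (hgpos t ht')).comp t (hg t ht')).add (hasDerivAt_id t)
      have hne : F (g t) ≠ 0 := (hFpos _ (hgpos t ht')).ne'
      have h2 : (F (g t))⁻¹ * (-F (g t)) + 1 = 0 := by
        field_simp
        norm_num
      rw [h2] at h1
      exact h1.hasDerivWithinAt
    intro t ht
    have := constant_of_has_deriv_right_zero hcont hderiv t ht
    simpa using this
  -- f side : Φ (f t) + t ≤ Φ (f 0)
  have huf : ∀ t ∈ Set.Icc 0 T, Φ (f t) + t ≤ Φ (f 0) := by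
    have hcont : ContinuousOn (fun t => Φ (f t) + t) (Set.Icc 0 T) := by
      apply ContinuousOn.add _ continuousOn_id
      exact fun t ht => ((hΦderiv (f t) (hfpos t ht)).continuousAt.comp_continuousWithinAt
        (hfc t ht))
    have := image_le_of_liminf_slope_right_le_deriv_boundary (f := fun t => Φ (f t) + t)
      (a := 0) (b := T) (B := fun _ => Φ (f 0)) (B' := fun _ => 0) hcont
      (by simp) continuousOn_const (fun x _ => hasDerivWithinAt_const x _ _) ?_
    · exact fun t ht => this ht
    -- the slope bound
    intro x hx r hr
    have hxT : x ∈ Set.Icc 0 T := Set.Ico_subset_Icc_self hx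
    have hy₀ : 0 < f x := hfpos x hxT
    set c₀ : ℝ := F (f x) with hc₀def
    have hc₀ : 0 < c₀ := hFpos _ hy₀
    set ε : ℝ := min (c₀ / 2) (r * c₀ / 4) with hεdef
    have hε : 0 < ε := lt_min (by linarith) (by positivity)
    have hε1 : ε ≤ c₀ / 2 := min_le_left _ _
    have hε2 : ε ≤ r * c₀ / 4 := min_le_right _ _
    -- continuity of F at f x
    have hFy : ContinuousAt F (f x) := hFc.continuousAt (isOpen_Ioi.mem_nhds hy₀)
    obtain ⟨δ₁, hδ₁, hδ₁F⟩ :=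
      Metric.continuousAt_iff.mp hFy ε hε
    -- continuity of f at x within Icc 0 T
    obtain ⟨δ₂, hδ₂, hδ₂f⟩ :=
      Metric.continuousWithinAt_iff.mp (hfc x hxT) δ₁ hδ₁
    set c : ℝ := min T (x + δ₂ / 2) with hcdef
    have hxc : x < c := lt_min hx.2 (by linarith)
    apply Filter.Eventually.frequently
    filter_upwards [Ioc_mem_nhdsGT_of_mem ⟨le_rfl, hxc⟩] with z hz
    have hzT : z ∈ Set.Icc 0 T := ⟨hx.1.trans hz.1.le, hz.2.trans (min_le_left _ _)⟩
    have hxz : x ≤ z := hz.1.le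
    have hzx2 : z - x < δ₂ := by
      have : z ≤ x + δ₂ / 2 := hz.2.trans (min_le_right _ _)
      linarith
    -- uniform bound for F (f u)
    have hfu : ∀ u ∈ Set.Icc x z, |f u - f x| < δ₁ := by
      intro u hu
      have huT : u ∈ Set.Icc 0 T := hsubI x z hxT hzT hxz hu
      have : dist u x < δ₂ := by
        rw [Real.dist_eq, abs_of_nonneg (by linarith [hu.1])]
        linarith [hu.2]
      have := hδ₂f huT this
      rwa [Real.dist_eq] at this
    have hFfu : ∀ u ∈ Set.Icc x z, c₀ - ε < F (f u) ∧ F (f u) < c₀ + ε := by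
      intro u hu
      have := hδ₁F (show dist (f u) (f x) < δ₁ by rw [Real.dist_eq]; exact hfu u hu)
      rw [Real.dist_eq, abs_lt] at this
      constructor <;> linarith [this.1, this.2]
    -- Step A : f z - f x ≤ -(c₀ - ε) * (z - x)
    have hstepA : f z - f x ≤ -((z - x) * (c₀ - ε)) := by
      have h1 := hdecr x z hxT hzT hxz
      have h2 : (z - x) * (c₀ - ε) ≤ ∫ s in x..z, F (f s) := by
        have := intervalIntegral.integral_mono_on hxz
          (_root_.intervalIntegrable_const (c := c₀ - ε)) (hFfc x z hxT hzT hxz)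
          (fun u hu => (hFfu u hu).1.le)
        rwa [intervalIntegral.integral_const, smul_eq_mul] at this
      linarith
    have hzxpos : (0:ℝ) < z - x := sub_pos.mpr hz.1
    have hfzx : f z < f x := by nlinarith
    have hfz : 0 < f z := hfpos z hzT
    -- Step B : f x - f z ≤ (c₀ + ε) * (Φ (f x) - Φ (f z))
    have hstepB : f x - f z ≤ (c₀ + ε) * (Φ (f x) - Φ (f z)) := by
      have hd := hΦdiff (f z) (f x) hfz hy₀
      have hptwise : ∀ y ∈ Set.Icc (f z) (f x), (c₀ + ε)⁻¹ ≤ (F y)⁻¹ := by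
        intro y hy
        have hyδ : |y - f x| < δ₁ := by
          have h1 := hfu z (Set.right_mem_Icc.mpr hxz)
          rw [abs_lt] at h1 ⊢
          constructor <;> [linarith [hy.1, h1.1]; linarith [hy.2]]
        have h2 := hδ₁F (show dist y (f x) < δ₁ by rwa [Real.dist_eq])
        rw [Real.dist_eq, abs_lt] at h2
        have hFypos : 0 < F y := by linarith [h2.1, hε1]
        exact inv_anti₀ hFypos (by linarith [h2.2])
      have h2 : (f x - f z) * (c₀ + ε)⁻¹ ≤ ∫ y in (f z)..(f x), (F y)⁻¹ := by
        have := intervalIntegral.integral_mono_on hfzx.le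
          (_root_.intervalIntegrable_const (c := (c₀ + ε)⁻¹)) (hFinv_int (f z) (f x) hfz hy₀)
          hptwise
        rwa [intervalIntegral.integral_const, smul_eq_mul] at this
      have h3 : (f x - f z) * (c₀ + ε)⁻¹ ≤ Φ (f x) - Φ (f z) := by linarith
      calc f x - f z = ((f x - f z) * (c₀ + ε)⁻¹) * (c₀ + ε) := by
            field_simp
        _ ≤ (Φ (f x) - Φ (f z)) * (c₀ + ε) := by
            apply mul_le_mul_of_nonneg_right h3 (by linarith)
        _ = (c₀ + ε) * (Φ (f x) - Φ (f z)) := by ring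
    -- conclude the slope bound
    rw [slope_def_field, div_lt_iff₀ hzxpos]
    -- goal : Φ (f z) + z - (Φ (f x) + x) < r * (z - x)
    have hΦfdiff : (c₀ + ε) * (Φ (f x) - Φ (f z)) ≥ (c₀ - ε) * (z - x) := by
      nlinarith [hstepA, hstepB]
    nlinarith [hΦfdiff, mul_pos hr hzxpos, mul_pos hc₀ hzxpos,
      mul_pos (mul_pos hr hc₀) hzxpos, mul_pos hε hzxpos, mul_pos hr (mul_pos hε hzxpos)]
  -- conclusion
  intro t ht
  have h1 : Φ (f t) + t ≤ Φ (f 0) := huf t ht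
  have h2 : Φ (g t) + t = Φ (g 0) := by have := hΦg t ht; linarith
  have h3 : Φ (f 0) ≤ Φ (g 0) :=
    hΦmono _ _ (hfpos 0 ⟨le_rfl, hT⟩) (hgpos 0 ⟨le_rfl, hT⟩) h0
  by_contra hlt
  push_neg at hlt
  have := hΦstrict (g t) (f t) (hgpos t ht) hlt
  linarith
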